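/- For n ≥ 3, α(H_n) + α(L(H_n)) = 2n + 1 and α(H_n) · α(L(H_n)) = n(n + 1), where H_n is the helm graph. -/

import Mathlib

open SimpleGraph

/-- The independence number of a graph: the maximum cardinality of a set of
pairwise non-adjacent vertices. -/
noncomputable def indepNum {V : Type*} (G : SimpleGraph V) : ℕ :=
  sSup {k | ∃ s : Set V, s.Pairwise (fun a b => ¬ G.Adj a b) ∧ s.ncard = k}

/-- The matching number of a graph: the maximum cardinality of a set of edges of
the graph, no two of which share an endpoint. -/
noncomputable def matchNum {V : Type*} (G : SimpleGraph V) : ℕ :=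
  sSup {k | ∃ M : Set (Sym2 V), M ⊆ G.edgeSet ∧
    (M.Pairwise fun e f => ∀ v : V, ¬(v ∈ e ∧ v ∈ f)) ∧ M.ncard = k}

/-- The helm graph `H_n`: obtained from the wheel `W_{n+1}` by attaching one
pendant vertex to each cycle vertex.  Here `none` is the hub, `some (Sum.inl i)`
is the `i`-th cycle vertex and `some (Sum.inr i)` is the pendant vertex attached
to the `i`-th cycle vertex. -/
def helmGraph (n : ℕ) : SimpleGraph (Option (Fin n ⊕ Fin n)) :=
  SimpleGraph.fromRel fun x y =>
    match x, y with
    | none, some (Sum.inl _) => True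
    | some (Sum.inl a), some (Sum.inl b) => (cycleGraph n).Adj a b
    | some (Sum.inl a), some (Sum.inr b) => a = b
    | _, _ => False

/-- collapse each spoke pair to one point -/
private def hf (n : ℕ) : Option (Fin n ⊕ Fin n) → Option (Fin n)
  | none => none
  | some (Sum.inl i) => some i
  | some (Sum.inr i) => some i

/-- hub plus pendants -/
private def hg (n : ℕ) : Option (Fin n) → Option (Fin n ⊕ Fin n)
  | none => none
  | some i => some (Sum.inr i)

lemma helm_indepNum (n : ℕ) : _root_.indepNum (helmGraph n) = n + 1 := by
  have hbound : ∀ k ∈ {k | ∃ s : Set (Option (Fin n ⊕ Fin n)),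
      s.Pairwise (fun a b => ¬ (helmGraph n).Adj a b) ∧ s.ncard = k}, k ≤ n + 1 := by
    rintro k ⟨s, hs, rfl⟩
    have hinj : Set.InjOn (hf n) s := by
      intro x hx y hy hxy
      by_contra hne
      rcases x with _ | (i | i) <;> rcases y with _ | (j | j) <;>
        simp_all [hf]
      · exact hs hx hy (by simp [hxy]) (by simp [helmGraph, hxy])
      · exact hs hx hy (by simp [hxy]) (by simp [helmGraph, hxy])
    calc s.ncard = ((hf n) '' s).ncard := (Set.ncard_image_of_injOn hinj).symm
      _ ≤ (Set.univ : Set (Option (Fin n))).ncard :=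
          Set.ncard_le_ncard (Set.subset_univ _) Set.finite_univ
      _ = n + 1 := by simp [Set.ncard_univ]
  have hmem : (n + 1) ∈ {k | ∃ s : Set (Option (Fin n ⊕ Fin n)),
      s.Pairwise (fun a b => ¬ (helmGraph n).Adj a b) ∧ s.ncard = k} := by
    refine ⟨Set.range (hg n), ?_, ?_⟩
    · rintro _ ⟨a, rfl⟩ _ ⟨b, rfl⟩ hne
      rcases a with _ | i <;> rcases b with _ | j <;> simp_all [hg, helmGraph]
    · have hinj : Function.Injective (hg n) := by
        intro a b hab
        rcases a with _ | i <;> rcases b with _ | j <;> simp_all [hg]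
      rw [← Nat.card_coe_set_eq, Nat.card_range_of_injective hinj]
      simp
  exact le_antisymm (csSup_le ⟨n + 1, hmem⟩ hbound) (le_csSup ⟨n + 1, hbound⟩ hmem)

private def he (n : ℕ) (i : Fin n) : (helmGraph n).edgeSet :=
  ⟨s(some (Sum.inl i), some (Sum.inr i)), by simp [helmGraph]⟩

lemma helm_lineGraph_indepNum (n : ℕ) : _root_.indepNum (helmGraph n).lineGraph = n := by
  classical
  have hbound : ∀ k ∈ {k | ∃ s : Set (helmGraph n).edgeSet,
      s.Pairwise (fun a b => ¬ (helmGraph n).lineGraph.Adj a b) ∧ s.ncard = k}, k ≤ n := by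
    rintro k ⟨M, hM, rfl⟩
    have hMfin : M.Finite := Set.toFinite M
    set Mf := hMfin.toFinset with hMf
    set t : (helmGraph n).edgeSet → Finset (Option (Fin n ⊕ Fin n)) :=
      fun e => Finset.univ.filter (· ∈ (e : Sym2 (Option (Fin n ⊕ Fin n)))) with ht
    have hcard2 : ∀ e : (helmGraph n).edgeSet, (t e).card = 2 := by
      rintro ⟨e, he⟩
      induction e using Sym2.ind with
      | _ a b =>
        have hne : a ≠ b := ((helmGraph n).mem_edgeSet.mp he).ne
        have : t ⟨s(a, b), he⟩ = {a, b} := by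
          ext v; simp [ht, Sym2.mem_iff]
        rw [this, Finset.card_insert_of_notMem (by simpa using hne), Finset.card_singleton]
    have hdisj : ∀ e ∈ Mf, ∀ f ∈ Mf, e ≠ f → Disjoint (t e) (t f) := by
      intro e heM f hfM hef
      rw [Finset.disjoint_left]
      intro v hv hv'
      simp only [ht, Finset.mem_filter] at hv hv'
      exact hM (hMfin.mem_toFinset.mp heM) (hMfin.mem_toFinset.mp hfM) hef
        ⟨hef, ⟨v, hv.2, hv'.2⟩⟩
    have hsum : (Mf.biUnion t).card = 2 * Mf.card := by
      rw [Finset.card_biUnion hdisj]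
      simp [hcard2, Finset.sum_const, mul_comm]
    have hle : (Mf.biUnion t).card ≤ 2 * n + 1 := by
      calc (Mf.biUnion t).card ≤ Fintype.card (Option (Fin n ⊕ Fin n)) :=
            Finset.card_le_univ _
        _ = 2 * n + 1 := by simp; ring
    have hMc : M.ncard = Mf.card := Set.ncard_eq_toFinset_card M hMfin
    omega
  have hmem : n ∈ {k | ∃ s : Set (helmGraph n).edgeSet,
      s.Pairwise (fun a b => ¬ (helmGraph n).lineGraph.Adj a b) ∧ s.ncard = k} := by
    refine ⟨Set.range (he n), ?_, ?_⟩
    · rintro _ ⟨i, rfl⟩ _ ⟨j, rfl⟩ hne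
      have hij : i ≠ j := by rintro rfl; exact hne rfl
      rintro ⟨-, v, hv1, hv2⟩
      have h1 : v ∈ (s(some (Sum.inl i), some (Sum.inr i)) :
        Sym2 (Option (Fin n ⊕ Fin n))) := hv1
      have h2 : v ∈ (s(some (Sum.inl j), some (Sum.inr j)) :
        Sym2 (Option (Fin n ⊕ Fin n))) := hv2
      rw [Sym2.mem_iff] at h1 h2
      rcases h1 with rfl | rfl <;> rcases h2 with h | h <;> simp_all
    · have hinj : Function.Injective (he n) := by
        intro i j hij
        have h2 := congrArg Subtype.val hij
        rw [he, he] at h2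
        simp [Sym2.eq_iff] at h2
        tauto
      rw [← Nat.card_coe_set_eq, Nat.card_range_of_injective hinj]
      simp
  exact le_antisymm (csSup_le ⟨n, hmem⟩ hbound) (le_csSup ⟨n, hbound⟩ hmem)

/-- For `n ≥ 3`, `α(H_n) + α(L(H_n)) = 2n + 1` and `α(H_n) · α(L(H_n)) = n(n+1)`. -/
theorem helm_indepNum_add_mul_indepNum_lineGraph (n : ℕ) (hn : 3 ≤ n) :
    _root_.indepNum (helmGraph n) + _root_.indepNum (helmGraph n).lineGraph = 2 * n + 1 ∧
    _root_.indepNum (helmGraph n) * _root_.indepNum (helmGraph n).lineGraph = n * (n + 1) := by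
  rw [helm_indepNum, helm_lineGraph_indepNum]
  constructor <;> ring
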